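/- Let n ≥ 2, let ε₁, ε₂ be real numbers with ε₂ > ε₁ > 0, and let S ⊆ [0,1]^n. Suppose S contains an image x with some coordinate x_i satisfying x_i > ε₁/ε₂. Then there exists x̃ ∈ ℝ^n such that x̃ ∈ t_combined(S) but x̃ ∉ t_add(S) ∪ t_func(S); consequently t_combined(S) is a strict superset of t_add(S) ∪ t_func(S). -/

import Mathlib

/-- The additive threat model: perturb each coordinate of some `x ∈ S` by `δᵢ`,
where `‖δ‖_∞ ≤ ε₁` (the sup norm is the default norm on `Fin n → ℝ`). -/
def tAdd (n : ℕ) (ε₁ : ℝ) (S : Set (Fin n → ℝ)) : Set (Fin n → ℝ) :=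
  { y | ∃ x ∈ S, ∃ δ : Fin n → ℝ, ‖δ‖ ≤ ε₁ ∧ y = fun i => x i + δ i }

/-- The functional threat model: scale every coordinate of some `x ∈ S` by a
single `c ∈ [1 - ε₂, 1 + ε₂]`. -/
def tFunc (n : ℕ) (ε₂ : ℝ) (S : Set (Fin n → ℝ)) : Set (Fin n → ℝ) :=
  { y | ∃ x ∈ S, ∃ c ∈ Set.Icc (1 - ε₂) (1 + ε₂), y = fun i => c * x i }

/-- The combined threat model: scale by `c ∈ [1 - ε₂, 1 + ε₂]` and then perturb
each coordinate by `δᵢ` with `|δᵢ| ≤ ε₁`. -/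
def tCombined (n : ℕ) (ε₁ ε₂ : ℝ) (S : Set (Fin n → ℝ)) : Set (Fin n → ℝ) :=
  { y | ∃ x ∈ S, ∃ c ∈ Set.Icc (1 - ε₂) (1 + ε₂), ∃ δ : Fin n → ℝ,
      (∀ i, |δ i| ≤ ε₁) ∧ y = fun i => c * x i + δ i }

/-- If `n ≥ 2`, `ε₂ > ε₁ > 0`, `S ⊆ [0,1]^n`, and `S` contains an image with a
coordinate exceeding `ε₁ / ε₂`, then there is an adversarial example allowed by
the combined threat model but by neither constituent threat model; hence the
combined threat model is a strict superset of their union. -/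
theorem combined_strict_superset (n : ℕ) (hn : 2 ≤ n) (ε₁ ε₂ : ℝ)
    (hε₁ : 0 < ε₁) (hε₂ : ε₁ < ε₂)
    (S : Set (Fin n → ℝ)) (hS : ∀ x ∈ S, ∀ i, x i ∈ Set.Icc (0 : ℝ) 1)
    (hx : ∃ x ∈ S, ∃ i, x i > ε₁ / ε₂) :
    (∃ y : Fin n → ℝ, y ∈ tCombined n ε₁ ε₂ S ∧
      y ∉ tAdd n ε₁ S ∪ tFunc n ε₂ S) ∧
    tAdd n ε₁ S ∪ tFunc n ε₂ S ⊂ tCombined n ε₁ ε₂ S := by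
  obtain ⟨x, hxS, i, hxi⟩ := hx
  have hε₂0 : (0:ℝ) < ε₂ := lt_trans hε₁ hε₂
  have h1ε : (0:ℝ) < 1 + ε₂ := by linarith
  -- the sup of the i-th coordinates over S
  set T : Set ℝ := (fun z : Fin n → ℝ => z i) '' S with hT
  have hTne : T.Nonempty := ⟨x i, x, hxS, rfl⟩
  have hTbdd : BddAbove T := by
    refine ⟨1, ?_⟩
    rintro a ⟨z, hzS, rfl⟩
    exact (hS z hzS i).2
  set M : ℝ := sSup T with hM
  have hxile : x i ≤ M := le_csSup hTbdd ⟨x, hxS, rfl⟩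
  have hMgt : ε₁ / ε₂ < M := lt_of_lt_of_le hxi hxile
  have hMε : ε₁ < ε₂ * M := by
    rw [div_lt_iff₀ hε₂0] at hMgt
    linarith [hMgt]
  have hle : ∀ z ∈ S, z i ≤ M := fun z hz => le_csSup hTbdd ⟨z, hz, rfl⟩
  -- pick x'' ∈ S with x'' i > M - ε₁/(1+ε₂)
  have hlt : M - ε₁ / (1 + ε₂) < sSup T := by
    rw [← hM]
    have : 0 < ε₁ / (1 + ε₂) := div_pos hε₁ h1ε
    linarith
  obtain ⟨a, ⟨w, hwS, hwa⟩, hagt⟩ := exists_lt_of_lt_csSup hTne hlt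
  subst hwa
  -- key inequalities
  have hkey : (1 + ε₂) * w i > (1 + ε₂) * M - ε₁ := by
    have := mul_lt_mul_of_pos_left hagt h1ε
    rw [mul_sub] at this
    rw [mul_div_cancel₀ ε₁ (ne_of_gt h1ε)] at this
    linarith
  have hkey2 : (1 + ε₂) * w i > M + ε₁ - ε₁ := by nlinarith
  -- the adversarial example
  refine ⟨⟨fun j => (1 + ε₂) * w j + ε₁, ?_, ?_⟩, ?_⟩
  · exact ⟨w, hwS, 1 + ε₂, ⟨by linarith, le_refl _⟩, fun _ => ε₁,
      fun _ => by rw [abs_of_pos hε₁], rfl⟩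
  · rintro (⟨z, hzS, δ, hδ, hy⟩ | ⟨z, hzS, c, ⟨hc1, hc2⟩, hy⟩)
    · have h := congrFun hy i
      have hδi : |δ i| ≤ ε₁ := by
        have := norm_le_pi_norm δ i
        rw [Real.norm_eq_abs] at this
        linarith
      have hzi : z i ≤ M := hle z hzS
      have habs := abs_le.mp hδi
      nlinarith
    · have h := congrFun hy i
      have hzi : z i ≤ M := hle z hzS
      have hzi0 : 0 ≤ z i := (hS z hzS i).1
      have : c * z i ≤ (1 + ε₂) * M := by nlinarith
      nlinarith
  · constructor
    · rintro y (⟨z, hzS, δ, hδ, hy⟩ | ⟨z, hzS, c, hc, hy⟩)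
      · refine ⟨z, hzS, 1, ⟨by linarith, by linarith⟩, δ, fun j => ?_, ?_⟩
        · have := norm_le_pi_norm δ j
          rw [Real.norm_eq_abs] at this
          linarith
        · rw [hy]; funext j; ring
      · exact ⟨z, hzS, c, hc, 0, fun j => by simp [le_of_lt hε₁],
          by rw [hy]; funext j; simp⟩
    · intro hsub
      obtain ⟨y, hy1, hy2⟩ : (∃ y : Fin n → ℝ, y ∈ tCombined n ε₁ ε₂ S ∧
          y ∉ tAdd n ε₁ S ∪ tFunc n ε₂ S) := by
        refine ⟨fun j => (1 + ε₂) * w j + ε₁, ?_, ?_⟩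
        · exact ⟨w, hwS, 1 + ε₂, ⟨by linarith, le_refl _⟩, fun _ => ε₁,
            fun _ => by rw [abs_of_pos hε₁], rfl⟩
        · rintro (⟨z, hzS, δ, hδ, hy⟩ | ⟨z, hzS, c, ⟨hc1, hc2⟩, hy⟩)
          · have h := congrFun hy i
            have hδi : |δ i| ≤ ε₁ := by
              have := norm_le_pi_norm δ i
              rw [Real.norm_eq_abs] at this
              linarith
            have hzi : z i ≤ M := hle z hzS
            have habs := abs_le.mp hδi
            nlinarith
          · have h := congrFun hy i
            have hzi : z i ≤ M := hle z hzS
            have hzi0 : 0 ≤ z i := (hS z hzS i).1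
            have : c * z i ≤ (1 + ε₂) * M := by nlinarith
            nlinarith
      exact hy2 (hsub hy1)
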